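/- arXiv:1701.08246 — 3 statements merged into one kernel-verified Lean document; each statement's English description precedes it below -/
import Mathlib

section
/- Let $(u_k)$ and $(v_k)$ be sequences of nonzero vectors in a real inner product space. If both normalized sequences $u_k/\|u_k\|$ and $v_k/\|v_k\|$ converge to the same unit vector $u$, then $u_k + v_k \ne 0$ for all sufficiently large $k$ and the sequence $(u_k+v_k)/\|u_k+v_k\|$ also converges to $u$. -/
open Filter Topology

theorem stmt1 {E : Type*} [NormedAddCommGroup E] [InnerProductSpace ℝ E]
    (u : E) (hu : ‖u‖ = 1) (uk vk : ℕ → E)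
    (huk : ∀ k, uk k ≠ 0) (hvk : ∀ k, vk k ≠ 0)
    (h1 : Tendsto (fun k => ‖uk k‖⁻¹ • uk k) atTop (𝓝 u))
    (h2 : Tendsto (fun k => ‖vk k‖⁻¹ • vk k) atTop (𝓝 u)) :
    (∀ᶠ k in atTop, uk k + vk k ≠ 0) ∧
    Tendsto (fun k => ‖uk k + vk k‖⁻¹ • (uk k + vk k)) atTop (𝓝 u) := by
  set w : ℕ → E := fun k => (‖uk k‖ + ‖vk k‖)⁻¹ • (uk k + vk k) with hwdef
  have hab : ∀ k, 0 < ‖uk k‖ + ‖vk k‖ := fun k =>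
    add_pos (norm_pos_iff.mpr (huk k)) (norm_pos_iff.mpr (hvk k))
  have hw : Tendsto w atTop (𝓝 u) := by
    rw [tendsto_iff_norm_sub_tendsto_zero] at h1 h2 ⊢
    have hbound : ∀ k, ‖w k - u‖ ≤ ‖‖uk k‖⁻¹ • uk k - u‖ + ‖‖vk k‖⁻¹ • vk k - u‖ := by
      intro k
      have ha : 0 < ‖uk k‖ := norm_pos_iff.mpr (huk k)
      have hb : 0 < ‖vk k‖ := norm_pos_iff.mpr (hvk k)
      have hab' := hab k
      have key : w k - u = (‖uk k‖/(‖uk k‖+‖vk k‖)) • (‖uk k‖⁻¹ • uk k - u)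
          + (‖vk k‖/(‖uk k‖+‖vk k‖)) • (‖vk k‖⁻¹ • vk k - u) := by
        simp only [hwdef]
        match_scalars <;> (field_simp; try ring)
      rw [key]
      calc ‖(‖uk k‖/(‖uk k‖+‖vk k‖)) • (‖uk k‖⁻¹ • uk k - u)
          + (‖vk k‖/(‖uk k‖+‖vk k‖)) • (‖vk k‖⁻¹ • vk k - u)‖
          ≤ ‖(‖uk k‖/(‖uk k‖+‖vk k‖)) • (‖uk k‖⁻¹ • uk k - u)‖
            + ‖(‖vk k‖/(‖uk k‖+‖vk k‖)) • (‖vk k‖⁻¹ • vk k - u)‖ := norm_add_le _ _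
        _ ≤ ‖‖uk k‖⁻¹ • uk k - u‖ + ‖‖vk k‖⁻¹ • vk k - u‖ := by
            rw [norm_smul, norm_smul, Real.norm_eq_abs, Real.norm_eq_abs,
              abs_of_pos (div_pos ha hab'), abs_of_pos (div_pos hb hab')]
            have h1' : ‖uk k‖/(‖uk k‖+‖vk k‖) ≤ 1 := by
              rw [div_le_one hab']; linarith
            have h2' : ‖vk k‖/(‖uk k‖+‖vk k‖) ≤ 1 := by
              rw [div_le_one hab']; linarith
            nlinarith [norm_nonneg (‖uk k‖⁻¹ • uk k - u), norm_nonneg (‖vk k‖⁻¹ • vk k - u),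
              div_pos ha hab', div_pos hb hab']
    have h0 : Tendsto (fun k => ‖‖uk k‖⁻¹ • uk k - u‖ + ‖‖vk k‖⁻¹ • vk k - u‖) atTop (𝓝 0) := by
      simpa using h1.add h2
    exact squeeze_zero (fun k => norm_nonneg _) hbound h0
  have hnw : Tendsto (fun k => ‖w k‖) atTop (𝓝 1) := by
    simpa [hu] using hw.norm
  have hev : ∀ᶠ k in atTop, 0 < ‖w k‖ :=
    hnw.eventually (eventually_gt_nhds one_pos)
  have hne : ∀ᶠ k in atTop, uk k + vk k ≠ 0 := by
    filter_upwards [hev] with k hk hs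
    rw [hwdef] at hk
    simp [hs] at hk
  refine ⟨hne, ?_⟩
  have heq : (fun k => ‖uk k + vk k‖⁻¹ • (uk k + vk k)) = fun k => ‖w k‖⁻¹ • w k := by
    funext k
    have hc := hab k
    simp only [hwdef, norm_smul, Real.norm_eq_abs, abs_of_pos (inv_pos.mpr hc), smul_smul]
    congr 1
    rw [mul_inv, inv_inv, mul_comm, ← mul_assoc, inv_mul_cancel₀ hc.ne', one_mul]
  rw [heq]
  have := (hnw.inv₀ one_ne_zero).smul hw
  simpa using this
end

section
/- Let $u$ and $v$ be nonzero vectors in a real inner product space. Then $\frac{\|u+v\|}{\|u\|+\|v\|} \ge \frac{1}{2}\left\|\frac{u}{\|u\|} + \frac{v}{\|v\|}\right\|$. -/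
theorem stmt2 {E : Type*} [NormedAddCommGroup E] [InnerProductSpace ℝ E]
    (u v : E) (hu : u ≠ 0) (hv : v ≠ 0) :
    ‖u + v‖ / (‖u‖ + ‖v‖) ≥ (1 / 2) * ‖‖u‖⁻¹ • u + ‖v‖⁻¹ • v‖ := by
  have ha : (0:ℝ) < ‖u‖ := norm_pos_iff.mpr hu
  have hb : (0:ℝ) < ‖v‖ := norm_pos_iff.mpr hv
  set a := ‖u‖ with hadef
  set b := ‖v‖ with hbdef
  set t : ℝ := inner ℝ u v with htdef
  have ht : t ≤ a * b := real_inner_le_norm u v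
  have h1 : ‖u + v‖ ^ 2 = a ^ 2 + 2 * t + b ^ 2 := by
    rw [norm_add_sq_real]
  have h2 : ‖a⁻¹ • u + b⁻¹ • v‖ ^ 2 = 2 + 2 * (a⁻¹ * b⁻¹ * t) := by
    rw [norm_add_sq_real, norm_smul, norm_smul, real_inner_smul_left,
      real_inner_smul_right]
    simp [abs_of_pos, ha, hb, ← htdef]
    field_simp
    ring
  rw [ge_iff_le, le_div_iff₀ (by positivity)]
  have hn1 : (0:ℝ) ≤ ‖u + v‖ := norm_nonneg _
  have hn2 : (0:ℝ) ≤ ‖a⁻¹ • u + b⁻¹ • v‖ := norm_nonneg _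
  have key : (1 / 2 * ‖a⁻¹ • u + b⁻¹ • v‖ * (a + b)) ^ 2 ≤ ‖u + v‖ ^ 2 := by
    have habt : (a - b) ^ 2 * (a * b - t) ≥ 0 := by nlinarith
    have h2' : ‖a⁻¹ • u + b⁻¹ • v‖ ^ 2 * (a * b) = 2 * (a * b) + 2 * t := by
      rw [h2]; field_simp
    nlinarith [sq_nonneg (a - b), mul_pos ha hb, sq_nonneg (‖a⁻¹ • u + b⁻¹ • v‖)]
  nlinarith [mul_nonneg (mul_nonneg (by linarith : (0:ℝ) ≤ 1/2 * ‖a⁻¹ • u + b⁻¹ • v‖) (by linarith : (0:ℝ) ≤ a + b)) hn1]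
end

section
/- Let $C$ be a nonempty closed subset of $X\times X$ for a Euclidean space $X$ such that $(t_1 v_1, t_2 v_2)\in C$ whenever $(v_1,v_2)\in C$ and $t_1,t_2>0$. Define $r = \min\{\|v_1+v_2\| : (v_1,v_2)\in C,\ \|v_1\|+\|v_2\|=1\}$ and $s = \min\{\|v_1+v_2\| : (v_1,v_2)\in C,\ \|v_1\|=\|v_2\|=1\}$ (with the conventions that a minimum over the empty set equals $1$ for $r$ and $2$ for $s$). Assume $C$ contains a pair $(v_1,v_2)$ with $v_1\ne 0$ and $v_2\ne 0$. Then $r = \frac{1}{2} s$. -/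
lemma key_ineq {X : Type*} [NormedAddCommGroup X] [InnerProductSpace ℝ X]
    (u1 u2 : X) (h1 : ‖u1‖ = 1) (h2 : ‖u2‖ = 1) (a b : ℝ)
    (ha : 0 ≤ a) (hb : 0 ≤ b) (hab : a + b = 1) :
    (1 / 2) * ‖u1 + u2‖ ≤ ‖a • u1 + b • u2‖ := by
  set c : ℝ := inner ℝ u1 u2 with hc
  have hcle : |c| ≤ 1 := by
    have := abs_real_inner_le_norm u1 u2
    rwa [h1, h2, mul_one] at this
  have e1 : ‖u1 + u2‖ ^ 2 = 2 + 2 * c := by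
    rw [@norm_add_sq_real, h1, h2]; ring
  have e2 : ‖a • u1 + b • u2‖ ^ 2 = a ^ 2 + 2 * (a * b * c) + b ^ 2 := by
    rw [@norm_add_sq_real, norm_smul, norm_smul, real_inner_smul_left,
      real_inner_smul_right, h1, h2]
    simp [abs_of_nonneg ha, abs_of_nonneg hb]
    ring
  have hab4 : a * b ≤ 1 / 4 := by nlinarith [sq_nonneg (a - b)]
  have hc1 : c ≤ 1 := (abs_le.mp hcle).2
  have hle : ((1 / 2) * ‖u1 + u2‖) ^ 2 ≤ ‖a • u1 + b • u2‖ ^ 2 := by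
    rw [mul_pow, e1, e2]
    nlinarith [mul_nonneg (by linarith : (0:ℝ) ≤ 1 - c)
      (by linarith : (0:ℝ) ≤ 1 / 4 - a * b)]
  nlinarith [norm_nonneg (u1 + u2), norm_nonneg (a • u1 + b • u2)]

theorem stmt5 {X : Type*} [NormedAddCommGroup X] [InnerProductSpace ℝ X]
    [FiniteDimensional ℝ X]
    (C : Set (X × X)) (hne : C.Nonempty) (hcl : IsClosed C)
    (hscale : ∀ p ∈ C, ∀ t₁ t₂ : ℝ, 0 < t₁ → 0 < t₂ → (t₁ • p.1, t₂ • p.2) ∈ C)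
    (hnz : ∃ p ∈ C, p.1 ≠ 0 ∧ p.2 ≠ 0) :
    sInf {r : ℝ | ∃ p ∈ C, ‖p.1‖ + ‖p.2‖ = 1 ∧ r = ‖p.1 + p.2‖} =
      (1 / 2) * sInf {r : ℝ | ∃ p ∈ C, ‖p.1‖ = 1 ∧ ‖p.2‖ = 1 ∧ r = ‖p.1 + p.2‖} := by
  set A := {r : ℝ | ∃ p ∈ C, ‖p.1‖ + ‖p.2‖ = 1 ∧ r = ‖p.1 + p.2‖} with hA
  set B := {r : ℝ | ∃ p ∈ C, ‖p.1‖ = 1 ∧ ‖p.2‖ = 1 ∧ r = ‖p.1 + p.2‖} with hB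
  obtain ⟨p, hp, hp1, hp2⟩ := hnz
  have hn1 : (0:ℝ) < ‖p.1‖ := norm_pos_iff.mpr hp1
  have hn2 : (0:ℝ) < ‖p.2‖ := norm_pos_iff.mpr hp2
  -- B is nonempty
  have hBne : B.Nonempty := by
    refine ⟨‖‖p.1‖⁻¹ • p.1 + ‖p.2‖⁻¹ • p.2‖,
      (‖p.1‖⁻¹ • p.1, ‖p.2‖⁻¹ • p.2),
      hscale p hp _ _ (inv_pos.mpr hn1) (inv_pos.mpr hn2), ?_, ?_, rfl⟩
    · simp [norm_smul, abs_of_nonneg (le_of_lt (inv_pos.mpr hn1)),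
        inv_mul_cancel₀ hn1.ne']
    · simp [norm_smul, abs_of_nonneg (le_of_lt (inv_pos.mpr hn2)),
        inv_mul_cancel₀ hn2.ne']
  have hBbdd : BddBelow B := by
    refine ⟨0, fun x hx => ?_⟩
    obtain ⟨q, _, _, _, hx⟩ := hx
    rw [hx]; exact norm_nonneg _
  -- half of any element of B is in A
  have half_mem : ∀ y ∈ B, (1/2 : ℝ) * y ∈ A := by
    intro y hy
    obtain ⟨q, hq, hq1, hq2, hy⟩ := hy
    refine ⟨((1/2 : ℝ) • q.1, (1/2 : ℝ) • q.2),
      hscale q hq _ _ (by norm_num) (by norm_num), ?_, ?_⟩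
    · simp [norm_smul, hq1, hq2]; norm_num
    · rw [hy]; rw [← smul_add, norm_smul]; norm_num
  have hAne : A.Nonempty := by
    obtain ⟨y, hy⟩ := hBne
    exact ⟨_, half_mem y hy⟩
  have hAbdd : BddBelow A := by
    refine ⟨0, fun x hx => ?_⟩
    obtain ⟨q, _, _, hx⟩ := hx
    rw [hx]; exact norm_nonneg _
  -- sInf B ≤ 2
  have hB2 : sInf B ≤ 2 := by
    obtain ⟨y, q, hq, hq1, hq2, hy⟩ := hBne
    refine le_trans (csInf_le hBbdd ⟨q, hq, hq1, hq2, hy⟩) ?_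
    rw [hy]
    calc ‖q.1 + q.2‖ ≤ ‖q.1‖ + ‖q.2‖ := norm_add_le _ _
      _ = 2 := by rw [hq1, hq2]; norm_num
  apply le_antisymm
  · -- sInf A ≤ (1/2) * sInf B
    have h2 : (2:ℝ) * sInf A ≤ sInf B := by
      apply le_csInf hBne
      intro y hy
      have := csInf_le hAbdd (half_mem y hy)
      linarith
    linarith
  · -- (1/2) * sInf B ≤ sInf A
    apply le_csInf hAne
    rintro x ⟨q, hq, hsum, hx⟩
    by_cases h1 : q.1 = 0
    · have : ‖q.2‖ = 1 := by rw [h1] at hsum; simpa using hsum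
      rw [hx, h1, zero_add, this]
      linarith
    · by_cases h2 : q.2 = 0
      · have : ‖q.1‖ = 1 := by rw [h2] at hsum; simpa using hsum
        rw [hx, h2, add_zero, this]
        linarith
      · have hq1 : (0:ℝ) < ‖q.1‖ := norm_pos_iff.mpr h1
        have hq2 : (0:ℝ) < ‖q.2‖ := norm_pos_iff.mpr h2
        set u1 := ‖q.1‖⁻¹ • q.1 with hu1
        set u2 := ‖q.2‖⁻¹ • q.2 with hu2
        have hun1 : ‖u1‖ = 1 := by
          simp [hu1, norm_smul, abs_of_nonneg (le_of_lt (inv_pos.mpr hq1)),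
            inv_mul_cancel₀ hq1.ne']
        have hun2 : ‖u2‖ = 1 := by
          simp [hu2, norm_smul, abs_of_nonneg (le_of_lt (inv_pos.mpr hq2)),
            inv_mul_cancel₀ hq2.ne']
        have hmem : ‖u1 + u2‖ ∈ B :=
          ⟨(u1, u2), hscale q hq _ _ (inv_pos.mpr hq1) (inv_pos.mpr hq2),
            hun1, hun2, rfl⟩
        have hle := csInf_le hBbdd hmem
        have hkey := key_ineq u1 u2 hun1 hun2 ‖q.1‖ ‖q.2‖
          (le_of_lt hq1) (le_of_lt hq2) hsum
        have hrw : ‖q.1‖ • u1 + ‖q.2‖ • u2 = q.1 + q.2 := by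
          rw [hu1, hu2, smul_smul, smul_smul, mul_inv_cancel₀ hq1.ne',
            mul_inv_cancel₀ hq2.ne', one_smul, one_smul]
        rw [hrw] at hkey
        rw [hx]
        calc (1/2 : ℝ) * sInf B ≤ (1/2) * ‖u1 + u2‖ := by linarith
          _ ≤ ‖q.1 + q.2‖ := hkey
end
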